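/- For any k ∈ ℕ, the function φ_k(x) := (1/k) Σ_{i=1}^k 2·σ(x − (2i−1)/(2k)), where σ(t) = max{t,0}, satisfies: φ_k(x) = 0 for all x ≤ 0, φ_k(x) ∈ [0,1] for all x ∈ [0,1], and |x² − φ_k(x)| ≤ 1/(2k²) for all x ∈ [0,1]. Moreover φ_k ∈ NN_{1,1}(k,1,3). -/

import Mathlib

open Finset
open scoped BigOperators

/-- ReLU activation. -/
noncomputable def relu (x : ℝ) : ℝ := max x 0

/-- Parameters of a fully connected feed-forward ReLU neural network with input
dimension `d` and output dimension `k`. -/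
structure MLP (d k : ℕ) where
  depth : ℕ
  width : ℕ → ℕ
  width_in : width 0 = d
  width_out : width (depth + 1) = k
  A : (ℓ : ℕ) → Matrix (Fin (width (ℓ + 1))) (Fin (width ℓ)) ℝ
  b : (ℓ : ℕ) → Fin (width (ℓ + 1)) → ℝ

namespace MLP

variable {d k : ℕ}

/-- Hidden layer outputs: `φ₀(x) = x`, `φ_{ℓ+1}(x) = σ(A_ℓ φ_ℓ(x) + b_ℓ)`. -/
noncomputable def layer (φ : MLP d k) (x : Fin d → ℝ) : (ℓ : ℕ) → Fin (φ.width ℓ) → ℝ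
  | 0 => fun i => x (Fin.cast φ.width_in i)
  | ℓ + 1 => fun i => relu ((φ.A ℓ).mulVec (layer φ x ℓ) i + φ.b ℓ i)

/-- The function computed by the network: `φ(x) = A_L φ_L(x) + b_L`. -/
noncomputable def eval (φ : MLP d k) (x : Fin d → ℝ) : Fin k → ℝ := fun j =>
  (φ.A φ.depth).mulVec (φ.layer x φ.depth) (Fin.cast φ.width_out.symm j) +
    φ.b φ.depth (Fin.cast φ.width_out.symm j)

/-- Maximum ℓ¹-norm of the rows of the augmented matrix `(A, b)`. -/
noncomputable def augNorm {m n : ℕ} (A : Matrix (Fin m) (Fin n) ℝ) (b : Fin m → ℝ) : ℝ :=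
  ⨆ i : Fin m, ((∑ j, |A i j|) + |b i|)

/-- The norm constraint `κ(θ) = ‖(A_L,b_L)‖ ∏_{ℓ<L} max{‖(A_ℓ,b_ℓ)‖, 1}`. -/
noncomputable def kappa (φ : MLP d k) : ℝ :=
  augNorm (φ.A φ.depth) (φ.b φ.depth) *
    ∏ ℓ ∈ Finset.range φ.depth, max (augNorm (φ.A ℓ) (φ.b ℓ)) 1

end MLP

/-- The class `NN_{d,k}(W, L)` of ReLU networks with width at most `W` and depth `L`. -/
def NNSet (d k W L : ℕ) : Set ((Fin d → ℝ) → Fin k → ℝ) :=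
  {f | ∃ φ : MLP d k, φ.depth = L ∧ (∀ ℓ, 1 ≤ ℓ → ℓ ≤ L → φ.width ℓ ≤ W) ∧ f = φ.eval}

/-- The norm-constrained class `NN_{d,k}(W, L, K)`. -/
def NNSetNorm (d k W L : ℕ) (K : ℝ) : Set ((Fin d → ℝ) → Fin k → ℝ) :=
  {f | ∃ φ : MLP d k, φ.depth = L ∧ (∀ ℓ, 1 ≤ ℓ → ℓ ≤ L → φ.width ℓ ≤ W) ∧
      φ.kappa ≤ K ∧ f = φ.eval}

/-- Scalar-valued networks `NN_{d,1}(W, L)`, viewed as maps `ℝ^d → ℝ`. -/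
def NNScalar (d W L : ℕ) : Set ((Fin d → ℝ) → ℝ) :=
  {f | ∃ g ∈ NNSet d 1 W L, f = fun x => g x 0}

/-- Scalar-valued norm-constrained networks `NN_{d,1}(W, L, K)`, viewed as maps `ℝ^d → ℝ`. -/
def NNScalarNorm (d W L : ℕ) (K : ℝ) : Set ((Fin d → ℝ) → ℝ) :=
  {f | ∃ g ∈ NNSetNorm d 1 W L K, f = fun x => g x 0}

/-- Networks `NN_{1,k}(W, L)` with one-dimensional input, viewed as maps `ℝ → ℝ^k`. -/
def NNFromReal (k W L : ℕ) : Set (ℝ → Fin k → ℝ) :=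
  {f | ∃ g ∈ NNSet 1 k W L, f = fun t => g (fun _ => t)}

/-- Norm-constrained networks `NN_{1,1}(W, L, K)`, viewed as maps `ℝ → ℝ`. -/
def NNRealScalarNorm (W L : ℕ) (K : ℝ) : Set (ℝ → ℝ) :=
  {f | ∃ g ∈ NNSetNorm 1 1 W L K, f = fun t => g (fun _ => t) 0}

/-- The function `φ_k(x) = (1/k) ∑_{i=1}^{k} 2 σ(x − (2i−1)/(2k))`. -/
noncomputable def phiSq (k : ℕ) (x : ℝ) : ℝ :=
  (k : ℝ)⁻¹ * ∑ i ∈ Finset.range k, 2 * relu (x - (2 * (i : ℝ) + 1) / (2 * (k : ℝ)))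

lemma relu_of_nonpos {t : ℝ} (h : t ≤ 0) : relu t = 0 := max_eq_right h

lemma relu_of_nonneg {t : ℝ} (h : 0 ≤ t) : relu t = t := max_eq_left h

lemma relu_nonneg (t : ℝ) : 0 ≤ relu t := le_max_right _ _

lemma relu_mul (a t : ℝ) (ha : 0 ≤ a) : relu (a * t) = a * relu t := by
  unfold relu
  rcases le_total t 0 with h | h
  · rw [max_eq_right h, max_eq_right (by nlinarith), mul_zero]
  · rw [max_eq_left h, max_eq_left (by positivity)]

lemma sum_odd (m : ℕ) : ∑ i ∈ Finset.range m, (2 * (i : ℝ) + 1) = (m : ℝ) ^ 2 := by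
  induction m with
  | zero => simp
  | succ n ih => rw [Finset.sum_range_succ, ih]; push_cast; ring

noncomputable def sqNet (k : ℕ) : MLP 1 1 where
  depth := 1
  width := fun ℓ => if ℓ = 1 then k else 1
  width_in := rfl
  width_out := rfl
  A
    | 0 => fun i _ => (2 * (k : ℝ)) / (2 * (k : ℝ) + 2 * (i : ℝ) + 1)
    | 1 => fun _ j => (2 * (k : ℝ) + 2 * (j : ℝ) + 1) / (k : ℝ) ^ 2
    | _ + 2 => 0
  b
    | 0 => fun i => -(2 * (i : ℝ) + 1) / (2 * (k : ℝ) + 2 * (i : ℝ) + 1)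
    | _ + 1 => 0

lemma ciSup_const_eq {α : Type*} [Nonempty α] {f : α → ℝ} {c : ℝ} (h : ∀ i, f i = c) :
    ⨆ i, f i = c := by
  rw [show f = fun _ => c from funext h]; exact ciSup_const

lemma sqNet_kappa (k : ℕ) (hk : 1 ≤ k) : (sqNet k).kappa ≤ 3 := by
  have hk0 : (0 : ℝ) < k := by exact_mod_cast hk
  haveI : Nonempty (Fin k) := ⟨⟨0, hk⟩⟩
  have h0 : MLP.augNorm ((sqNet k).A 0) ((sqNet k).b 0) = 1 := by
    unfold MLP.augNorm
    haveI : Nonempty (Fin ((sqNet k).width (0 + 1))) := ⟨⟨0, hk⟩⟩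
    apply ciSup_const_eq
    intro i
    have hD : (0:ℝ) < 2 * (k:ℝ) + 2 * (i:ℝ) + 1 := by positivity
    simp only [sqNet, Fin.sum_univ_one]
    erw [Fin.sum_univ_one]
    rw [abs_of_pos (by positivity), abs_of_nonpos (by
      apply div_nonpos_of_nonpos_of_nonneg <;> nlinarith)]
    field_simp
    ring
  have h1 : MLP.augNorm ((sqNet k).A 1) ((sqNet k).b 1) = 3 := by
    unfold MLP.augNorm
    haveI : Nonempty (Fin ((sqNet k).width (1 + 1))) := ⟨⟨0, Nat.one_pos⟩⟩
    apply ciSup_const_eq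
    intro i
    show (∑ j : Fin k, |(sqNet k).A 1 i j|) + |(sqNet k).b 1 i| = 3
    have e1 : ∑ j : Fin k, |(sqNet k).A 1 i j|
        = ∑ j : Fin k, (2 * (k:ℝ) + 2 * (j:ℝ) + 1) / (k:ℝ)^2 := by
      apply Finset.sum_congr rfl
      intro j _
      simp only [sqNet]
      rw [abs_of_pos (by positivity)]
    rw [e1]
    have hsum : ∑ j : Fin k, (2 * (k:ℝ) + 2 * (j:ℝ) + 1) / (k:ℝ)^2 = 3 := by
      rw [Fin.sum_univ_eq_sum_range (fun j => (2 * (k:ℝ) + 2 * (j:ℝ) + 1) / (k:ℝ)^2),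
        ← Finset.sum_div]
      have e2 : ∑ j ∈ Finset.range k, (2 * (k:ℝ) + 2 * (j:ℝ) + 1)
          = ∑ j ∈ Finset.range k, ((2 * (k:ℝ)) + (2 * (j:ℝ) + 1)) := by
        apply Finset.sum_congr rfl; intros; ring
      rw [e2, Finset.sum_add_distrib, Finset.sum_const, Finset.card_range, sum_odd, nsmul_eq_mul]
      field_simp; ring
    rw [hsum]
    simp [sqNet]
    rfl
  unfold MLP.kappa
  have hd : (sqNet k).depth = 1 := rfl
  rw [hd, Finset.prod_range_one, h0, h1]
  norm_num

lemma phiSq_ident (k : ℕ) (hk : 1 ≤ k) {x : ℝ} (hx0 : 0 ≤ x) (hx1 : x ≤ 1) :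
    x ^ 2 - phiSq k x = (x - (⌊(k : ℝ) * x + 1/2⌋₊ : ℝ) / k) ^ 2 := by
  have hk0 : (0 : ℝ) < k := by exact_mod_cast hk
  set m := ⌊(k : ℝ) * x + 1/2⌋₊ with hm
  have hub : (m : ℝ) ≤ (k : ℝ) * x + 1/2 := Nat.floor_le (by positivity)
  have hlb : (k : ℝ) * x + 1/2 < (m : ℝ) + 1 := Nat.lt_floor_add_one _
  have hmk : m ≤ k := by
    by_contra h
    push_neg at h
    have : (k : ℝ) + 1 ≤ (m : ℝ) := by exact_mod_cast h
    nlinarith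
  have hsplit : ∑ i ∈ Finset.range k, 2 * relu (x - (2 * (i : ℝ) + 1) / (2 * (k : ℝ)))
      = ∑ i ∈ Finset.range m, 2 * (x - (2 * (i : ℝ) + 1) / (2 * (k : ℝ))) := by
    rw [← Finset.sum_range_add_sum_Ico _ hmk]
    have hz : ∑ i ∈ Finset.Ico m k, 2 * relu (x - (2 * (i : ℝ) + 1) / (2 * (k : ℝ))) = 0 := by
      apply Finset.sum_eq_zero
      intro i hi
      obtain ⟨hmi, -⟩ := Finset.mem_Ico.mp hi
      have hmi' : (m : ℝ) ≤ (i : ℝ) := by exact_mod_cast hmi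
      rw [relu_of_nonpos, mul_zero]
      rw [sub_nonpos, le_div_iff₀ (by positivity)]
      nlinarith
    rw [hz, add_zero]
    apply Finset.sum_congr rfl
    intro i hi
    have hi' : (i : ℝ) + 1 ≤ (m : ℝ) := by exact_mod_cast Finset.mem_range.mp hi
    rw [relu_of_nonneg]
    rw [sub_nonneg, div_le_iff₀ (by positivity)]
    nlinarith
  have hval : ∑ i ∈ Finset.range m, 2 * (x - (2 * (i : ℝ) + 1) / (2 * (k : ℝ)))
      = 2 * (m : ℝ) * x - (m : ℝ) ^ 2 / k := by
    have e2 : ∀ i ∈ Finset.range m, 2 * (x - (2 * (i : ℝ) + 1) / (2 * (k : ℝ)))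
        = 2 * x - (2 * (i : ℝ) + 1) * (k : ℝ)⁻¹ := by
      intro i _
      field_simp
    rw [Finset.sum_congr rfl e2, Finset.sum_sub_distrib, Finset.sum_const, ← Finset.sum_mul,
      sum_odd, nsmul_eq_mul, Finset.card_range]
    field_simp
  unfold phiSq
  rw [hsplit, hval]
  field_simp
  ring

lemma floor_half_bound (k : ℕ) (hk : 1 ≤ k) {x : ℝ} (hx0 : 0 ≤ x) (hx1 : x ≤ 1) :
    (x - (⌊(k : ℝ) * x + 1/2⌋₊ : ℝ) / k) ^ 2 ≤ 1 / (2 * (k : ℝ) ^ 2) := by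
  have hk0 : (0 : ℝ) < k := by exact_mod_cast hk
  set m := ⌊(k : ℝ) * x + 1/2⌋₊ with hm
  have hub : (m : ℝ) ≤ (k : ℝ) * x + 1/2 := Nat.floor_le (by positivity)
  have hlb : (k : ℝ) * x + 1/2 < (m : ℝ) + 1 := Nat.lt_floor_add_one _
  have key : ((k : ℝ) * x - (m : ℝ)) ^ 2 ≤ 1/4 := by nlinarith
  have e : (x - (m : ℝ) / k) ^ 2 = ((k : ℝ) * x - (m : ℝ)) ^ 2 / (k : ℝ) ^ 2 := by
    field_simp
  rw [e, div_le_div_iff₀ (by positivity) (by positivity)]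
  nlinarith [sq_nonneg ((k : ℝ))]

lemma sqNet_eval (k : ℕ) (hk : 1 ≤ k) (t : ℝ) :
    (sqNet k).eval (fun _ => t) 0 = phiSq k t := by
  have hk0 : (0 : ℝ) < k := by exact_mod_cast hk
  have e0 : (sqNet k).eval (fun _ => t) 0 =
      ∑ j : Fin k, ((2 * (k : ℝ) + 2 * (j : ℝ) + 1) / (k : ℝ) ^ 2) *
        relu ((2 * (k : ℝ)) / (2 * (k : ℝ) + 2 * (j : ℝ) + 1) * t
          + -(2 * (j : ℝ) + 1) / (2 * (k : ℝ) + 2 * (j : ℝ) + 1)) := by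
    simp [MLP.eval, MLP.layer, sqNet, Matrix.mulVec, dotProduct, Fin.sum_univ_one]
    rfl
  rw [e0, Fin.sum_univ_eq_sum_range (fun j : ℕ => ((2 * (k : ℝ) + 2 * (j : ℝ) + 1) / (k : ℝ) ^ 2) *
        relu ((2 * (k : ℝ)) / (2 * (k : ℝ) + 2 * (j : ℝ) + 1) * t
          + -(2 * (j : ℝ) + 1) / (2 * (k : ℝ) + 2 * (j : ℝ) + 1)))]
  unfold phiSq
  rw [Finset.mul_sum]
  apply Finset.sum_congr rfl
  intro j _
  have hD : (0 : ℝ) < 2 * (k : ℝ) + 2 * (j : ℝ) + 1 := by positivity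
  have harg : (2 * (k : ℝ)) / (2 * (k : ℝ) + 2 * (j : ℝ) + 1) * t
      + -(2 * (j : ℝ) + 1) / (2 * (k : ℝ) + 2 * (j : ℝ) + 1)
      = ((2 * (k : ℝ)) / (2 * (k : ℝ) + 2 * (j : ℝ) + 1)) *
        (t - (2 * (j : ℝ) + 1) / (2 * (k : ℝ))) := by
    field_simp
    ring
  rw [harg, relu_mul _ _ (by positivity)]
  field_simp

/-- norm-constrained approximation of `x²`.  For any `k ∈ ℕ` the function
`φ_k` vanishes on `(-∞, 0]`, maps `[0,1]` into `[0,1]`, approximates `x²` on `[0,1]` with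
error `1/(2k²)`, and belongs to `NN_{1,1}(k, 1, 3)`. -/
theorem statement8 (k : ℕ) (hk : 1 ≤ k) :
    (∀ x : ℝ, x ≤ 0 → phiSq k x = 0) ∧
    (∀ x ∈ Set.Icc (0 : ℝ) 1, phiSq k x ∈ Set.Icc (0 : ℝ) 1) ∧
    (∀ x ∈ Set.Icc (0 : ℝ) 1, |x ^ 2 - phiSq k x| ≤ 1 / (2 * (k : ℝ) ^ 2)) ∧
    phiSq k ∈ NNRealScalarNorm k 1 3 := by

  refine ⟨?_, ?_, ?_, ?_⟩
  · intro x hx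
    unfold phiSq
    rw [Finset.sum_eq_zero, mul_zero]
    intro i _
    rw [relu_of_nonpos, mul_zero]
    have h1 : (0 : ℝ) ≤ (2 * (i : ℝ) + 1) / (2 * (k : ℝ)) := by positivity
    linarith
  · rintro x ⟨hx0, hx1⟩
    constructor
    · apply mul_nonneg (by positivity)
      apply Finset.sum_nonneg
      intro i _
      exact mul_nonneg (by norm_num) (relu_nonneg _)
    · have h := phiSq_ident k hk hx0 hx1
      nlinarith [sq_nonneg (x - (⌊(k : ℝ) * x + 1/2⌋₊ : ℝ) / k)]
  · rintro x ⟨hx0, hx1⟩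
    rw [phiSq_ident k hk hx0 hx1, abs_of_nonneg (sq_nonneg _)]
    exact floor_half_bound k hk hx0 hx1
  · refine ⟨(sqNet k).eval, ⟨sqNet k, rfl, ?_, sqNet_kappa k hk, rfl⟩, ?_⟩
    · intro ℓ h1 h2
      have hl : ℓ = 1 := le_antisymm h2 h1
      subst hl
      simp [sqNet]
    · funext t
      exact (sqNet_eval k hk t).symm
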